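/- arXiv:2412.15648 — 2 statements merged into one kernel-verified Lean document; each statement's English description precedes it below -/
import Mathlib

section
/- Let ρ satisfy the moment hypotheses and fix a positive integer σ. Then for every y ∈ ℝ, the complex numbers (ρ̂(√(σ/N)·y))^N converge to exp(−σγ y²/2) as N → ∞. -/
open MeasureTheory Filter Real Topology

/-- The Fourier transform `ρ̂(t) = ∫ e^{-itx} ρ(x) dx` of a real-valued function. -/
noncomputable def FT (ρ : ℝ → ℝ) (t : ℝ) : ℂ :=
  ∫ x : ℝ, Complex.exp (-Complex.I * t * x) * (ρ x : ℂ)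

/-- If `N * (u N - 1) → c` then `u N ^ N → exp c`. -/
lemma pow_tendsto_cexp {u : ℕ → ℂ} {c : ℂ}
    (h : Tendsto (fun N : ℕ => (N : ℂ) * (u N - 1)) atTop (𝓝 c)) :
    Tendsto (fun N : ℕ => u N ^ N) atTop (𝓝 (Complex.exp c)) := by
  have hinv : Tendsto (fun N : ℕ => ((N : ℂ))⁻¹) atTop (𝓝 0) := by
    rw [tendsto_zero_iff_norm_tendsto_zero]
    simpa [one_div] using tendsto_one_div_atTop_nhds_zero_nat (𝕜 := ℝ)
  have hw : Tendsto (fun N : ℕ => u N - 1) atTop (𝓝 0) := by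
    have := hinv.mul h
    rw [zero_mul] at this
    apply this.congr'
    filter_upwards [eventually_ge_atTop 1] with N hN
    have hN0 : (N : ℂ) ≠ 0 := Nat.cast_ne_zero.mpr (by omega)
    field_simp
  have hsmall : ∀ᶠ N in atTop, ‖u N - 1‖ < 1 / 2 := by
    have := Metric.tendsto_nhds.mp hw (1 / 2) (by norm_num)
    simpa [dist_zero_right] using this
  -- N * log (u N) → c
  have hlog : Tendsto (fun N : ℕ => (N : ℂ) * Complex.log (u N)) atTop (𝓝 c) := by
    have h2 : Tendsto (fun N : ℕ => (N : ℂ) * (Complex.log (u N) - (u N - 1)))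
        atTop (𝓝 0) := by
      apply squeeze_zero_norm'
        (a := fun N : ℕ => ‖(N : ℂ) * (u N - 1)‖ * ‖u N - 1‖)
      · filter_upwards [hsmall] with N hN
        have hlt : ‖u N - 1‖ < 1 := lt_of_lt_of_le hN (by norm_num)
        have hb := Complex.norm_log_one_add_sub_self_le hlt
        have hle : ‖Complex.log (u N) - (u N - 1)‖ ≤ ‖u N - 1‖ ^ 2 := by
          have h1 : (1 - ‖u N - 1‖)⁻¹ ≤ 2 := by
            rw [inv_le_comm₀ (by linarith) (by norm_num)]
            linarith
          have h2' : ‖u N - 1‖ ^ 2 * (1 - ‖u N - 1‖)⁻¹ / 2 ≤ ‖u N - 1‖ ^ 2 := by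
            have := mul_le_mul_of_nonneg_left h1 (sq_nonneg ‖u N - 1‖)
            linarith
          calc ‖Complex.log (u N) - (u N - 1)‖
              = ‖Complex.log (1 + (u N - 1)) - (u N - 1)‖ := by ring_nf
            _ ≤ ‖u N - 1‖ ^ 2 * (1 - ‖u N - 1‖)⁻¹ / 2 := hb
            _ ≤ ‖u N - 1‖ ^ 2 := h2'
        calc ‖(N : ℂ) * (Complex.log (u N) - (u N - 1))‖
            = (N : ℝ) * ‖Complex.log (u N) - (u N - 1)‖ := by
              simp [norm_mul]
          _ ≤ (N : ℝ) * (‖u N - 1‖ ^ 2) := by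
              exact mul_le_mul_of_nonneg_left hle (by positivity)
          _ = ‖(N : ℂ) * (u N - 1)‖ * ‖u N - 1‖ := by
              simp [norm_mul]; ring
      · have := (h.norm.mul hw.norm)
        simpa using this
    have := h.add h2
    rw [add_zero] at this
    apply this.congr
    intro N; ring
  have hexp := (Complex.continuous_exp.tendsto c).comp hlog
  apply hexp.congr'
  filter_upwards [hsmall] with N hN
  have hu0 : u N ≠ 0 := by
    intro h0
    rw [h0] at hN
    norm_num at hN
  simp only [Function.comp_apply]
  rw [Complex.exp_nat_mul, Complex.exp_log hu0]

/-- Taylor remainder of order 2 for `exp(-iθ)`. -/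
lemma taylor1_bound (θ : ℝ) :
    ‖Complex.exp (-Complex.I * θ) - 1 + Complex.I * θ‖ ≤ 3 * θ ^ 2 := by
  by_cases hθ : |θ| ≤ 1
  · have := Complex.norm_exp_sub_one_sub_id_le
      (x := -Complex.I * θ) (by simpa [abs_mul] using hθ)
    have habs : ‖-Complex.I * θ‖ = |θ| := by
      simp [norm_mul]
    calc ‖Complex.exp (-Complex.I * θ) - 1 + Complex.I * θ‖
        = ‖Complex.exp (-Complex.I * θ) - 1 - -Complex.I * θ‖ := by
          ring_nf
      _ ≤ ‖-Complex.I * θ‖ ^ 2 := this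
      _ = θ ^ 2 := by rw [habs, sq_abs]
      _ ≤ 3 * θ ^ 2 := by nlinarith [sq_nonneg θ]
  · push_neg at hθ
    have h1 : (1 : ℝ) ≤ θ ^ 2 := by nlinarith [sq_abs θ]
    have h2 : |θ| ≤ θ ^ 2 := by nlinarith [sq_abs θ, abs_nonneg θ]
    have hnorm : ‖Complex.exp (-Complex.I * θ)‖ = 1 := by
      rw [Complex.norm_exp]
      simp
    calc ‖Complex.exp (-Complex.I * θ) - 1 + Complex.I * θ‖
        ≤ ‖Complex.exp (-Complex.I * θ) - 1‖ + ‖Complex.I * (θ : ℂ)‖ :=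
          norm_add_le _ _
      _ ≤ (‖Complex.exp (-Complex.I * θ)‖ + ‖(1 : ℂ)‖) + ‖Complex.I * (θ : ℂ)‖ := by
          gcongr
          exact norm_sub_le _ _
      _ = 2 + |θ| := by
          rw [hnorm]
          simp [norm_mul]
          norm_num
      _ ≤ 3 * θ ^ 2 := by linarith

/-- The remainder in the second order Taylor expansion of the integrand. -/
noncomputable def rem (t x : ℝ) : ℂ :=
  Complex.exp (-Complex.I * t * x) - 1 + Complex.I * (t * x) + ((t * x : ℝ) : ℂ) ^ 2 / 2

lemma rem_bound (t x : ℝ) : ‖rem t x‖ ≤ 4 * (t ^ 2 * x ^ 2) := by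
  have h1 := taylor1_bound (t * x)
  have key : rem t x =
      (Complex.exp (-Complex.I * (t * x)) - 1 + Complex.I * (t * x))
        + ((t * x : ℝ) : ℂ) ^ 2 / 2 := by
    unfold rem
    push_cast
    ring_nf
  rw [key]
  have h2 : ‖((t * x : ℝ) : ℂ) ^ 2 / 2‖ = (t * x) ^ 2 / 2 := by
    rw [norm_div, norm_pow, Complex.norm_real, Real.norm_eq_abs, sq_abs]
    norm_num
  calc ‖_ + ((t * x : ℝ) : ℂ) ^ 2 / 2‖
      ≤ ‖Complex.exp (-Complex.I * (t * x)) - 1 + Complex.I * (t * x)‖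
        + ‖((t * x : ℝ) : ℂ) ^ 2 / 2‖ := norm_add_le _ _
    _ ≤ 3 * (t * x) ^ 2 + (t * x) ^ 2 / 2 := by
        rw [h2]
        have := taylor1_bound (t * x)
        push_cast at this ⊢
        linarith
    _ ≤ 4 * (t ^ 2 * x ^ 2) := by nlinarith [sq_nonneg (t * x), mul_pow t x 2]

lemma integral_cofReal {f : ℝ → ℝ} :
    (∫ x : ℝ, ((f x : ℝ) : ℂ)) = ((∫ x : ℝ, f x : ℝ) : ℂ) :=
  integral_ofReal

lemma integrable_exp_mul (ρ : ℝ → ℝ) (hInt : Integrable ρ) (t : ℝ) :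
    Integrable (fun x : ℝ => Complex.exp (-Complex.I * t * x) * (ρ x : ℂ)) := by
  apply Integrable.bdd_mul (c := 1) hInt.ofReal
  · apply Continuous.aestronglyMeasurable
    continuity
  · refine Filter.Eventually.of_forall (fun x => ?_)
    rw [Complex.norm_exp]
    simp

lemma rem_eq (t x : ℝ) :
    rem t x = Complex.exp (-Complex.I * t * x) - 1 - (-Complex.I * t * x)
      - (-Complex.I * t * x) ^ 2 / 2 := by
  unfold rem
  push_cast
  linear_combination ((t : ℂ) ^ 2 * (x : ℂ) ^ 2 / 2) * Complex.I_sq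

lemma FT_expand (ρ : ℝ → ℝ) (γ : ℝ) (hInt : Integrable ρ)
    (hmass : ∫ x : ℝ, ρ x = 1)
    (hm1 : Integrable (fun x : ℝ => x * ρ x))
    (hmean : ∫ x : ℝ, x * ρ x = 0)
    (hm2 : Integrable (fun x : ℝ => x ^ 2 * ρ x))
    (hγ : γ = ∫ x : ℝ, x ^ 2 * ρ x) (t : ℝ) :
    FT ρ t - 1 = -((t ^ 2 * γ / 2 : ℝ) : ℂ) + ∫ x : ℝ, rem t x * (ρ x : ℂ) := by
  have hA : Integrable (fun x : ℝ => Complex.exp (-Complex.I * t * x) * (ρ x : ℂ)) :=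
    integrable_exp_mul ρ hInt t
  have hB : Integrable (fun x : ℝ => ((ρ x : ℝ) : ℂ)) := hInt.ofReal
  have hC : Integrable (fun x : ℝ => Complex.I * ((t : ℂ) * x) * (ρ x : ℂ)) := by
    have := (hm1.ofReal).const_mul (Complex.I * t)
    apply this.congr
    filter_upwards with x
    push_cast
    try ring_nf
    try rfl
  have hD : Integrable (fun x : ℝ => ((t * x : ℝ) : ℂ) ^ 2 / 2 * (ρ x : ℂ)) := by
    have := (hm2.ofReal).const_mul ((t : ℂ) ^ 2 / 2)
    apply this.congr
    filter_upwards with x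
    push_cast
    try ring_nf
    try rfl
  have hrem : (fun x : ℝ => rem t x * (ρ x : ℂ)) =
      fun x : ℝ => Complex.exp (-Complex.I * t * x) * (ρ x : ℂ)
        - ((ρ x : ℝ) : ℂ)
        + Complex.I * ((t : ℂ) * x) * (ρ x : ℂ)
        + ((t * x : ℝ) : ℂ) ^ 2 / 2 * (ρ x : ℂ) := by
    funext x
    unfold rem
    push_cast
    ring
  have hint : (∫ x : ℝ, rem t x * (ρ x : ℂ)) =
      (∫ x : ℝ, Complex.exp (-Complex.I * t * x) * (ρ x : ℂ))
        - (∫ x : ℝ, ((ρ x : ℝ) : ℂ))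
        + (∫ x : ℝ, Complex.I * ((t : ℂ) * x) * (ρ x : ℂ))
        + (∫ x : ℝ, ((t * x : ℝ) : ℂ) ^ 2 / 2 * (ρ x : ℂ)) := by
    have h12 : Integrable (fun x : ℝ =>
        Complex.exp (-Complex.I * t * x) * (ρ x : ℂ) - ((ρ x : ℝ) : ℂ)) := hA.sub hB
    have h123 : Integrable (fun x : ℝ =>
        Complex.exp (-Complex.I * t * x) * (ρ x : ℂ) - ((ρ x : ℝ) : ℂ)
          + Complex.I * ((t : ℂ) * x) * (ρ x : ℂ)) := h12.add hC
    rw [hrem, integral_add h123 hD, integral_add h12 hC, integral_sub hA hB]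
  have e1 : (∫ x : ℝ, ((ρ x : ℝ) : ℂ)) = 1 := by
    rw [integral_cofReal, hmass]
    norm_num
  have e2 : (∫ x : ℝ, Complex.I * ((t : ℂ) * x) * (ρ x : ℂ)) = 0 := by
    have : (fun x : ℝ => Complex.I * ((t : ℂ) * x) * (ρ x : ℂ)) =
        fun x : ℝ => (Complex.I * t) * ((x * ρ x : ℝ) : ℂ) := by
      funext x; push_cast; ring
    rw [this, integral_const_mul, integral_cofReal, hmean]
    simp
  have e3 : (∫ x : ℝ, ((t * x : ℝ) : ℂ) ^ 2 / 2 * (ρ x : ℂ)) =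
      ((t : ℂ) ^ 2 / 2) * (γ : ℂ) := by
    have : (fun x : ℝ => ((t * x : ℝ) : ℂ) ^ 2 / 2 * (ρ x : ℂ)) =
        fun x : ℝ => ((t : ℂ) ^ 2 / 2) * ((x ^ 2 * ρ x : ℝ) : ℂ) := by
      funext x; push_cast; ring
    rw [this, integral_const_mul, integral_cofReal, ← hγ]
  rw [hint, e1, e2, e3]
  have : (∫ x : ℝ, Complex.exp (-Complex.I * t * x) * (ρ x : ℂ)) = FT ρ t := rfl
  rw [this]
  push_cast
  ring

theorem pointwise_convergence_of_char_powers
    (ρ : ℝ → ℝ) (γ : ℝ) (σ : ℕ) (hσ : 1 ≤ σ)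
    (hInt : Integrable ρ)
    (hpos : ∀ᵐ x : ℝ, 0 ≤ ρ x)
    (hmass : ∫ x : ℝ, ρ x = 1)
    (hm1 : Integrable (fun x : ℝ => x * ρ x))
    (hmean : ∫ x : ℝ, x * ρ x = 0)
    (hm2 : Integrable (fun x : ℝ => x ^ 2 * ρ x))
    (hγ : γ = ∫ x : ℝ, x ^ 2 * ρ x) (hγpos : 0 < γ) :
    ∀ y : ℝ,
      Tendsto (fun N : ℕ => (FT ρ (Real.sqrt ((σ : ℝ) / N) * y)) ^ N) atTop
        (𝓝 (Complex.exp (-((σ : ℝ) * γ * y ^ 2 / 2)))) := by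
  intro y
  set t : ℕ → ℝ := fun N => Real.sqrt ((σ : ℝ) / N) * y with ht
  have hmain : Tendsto (fun N : ℕ => (N : ℂ) * (FT ρ (t N) - 1)) atTop
      (𝓝 (-((((σ : ℝ) * γ * y ^ 2 / 2 : ℝ)) : ℂ))) := by
    by_cases hy : y = 0
    · subst hy
      have hFT : ∀ N : ℕ, FT ρ (t N) = 1 := by
        intro N
        have htN : t N = 0 := by simp [ht]
        rw [htN]
        unfold FT
        simp only [Complex.ofReal_zero, mul_zero, zero_mul, Complex.exp_zero, one_mul]
        rw [integral_cofReal, hmass, Complex.ofReal_one]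
      have hconst : (fun N : ℕ => (N : ℂ) * (FT ρ (t N) - 1)) = fun _ => 0 := by
        funext N; rw [hFT]; ring
      rw [hconst]
      simpa using tendsto_const_nhds
    · -- y ≠ 0
      have ht0 : Tendsto t atTop (𝓝 0) := by
        have h1 : Tendsto (fun N : ℕ => (σ : ℝ) / N) atTop (𝓝 0) :=
          tendsto_const_nhds.div_atTop tendsto_natCast_atTop_atTop
        have h2 := (Real.continuous_sqrt.tendsto 0).comp h1
        rw [Real.sqrt_zero] at h2
        simpa [ht] using h2.mul_const y
      have ht2 : ∀ N : ℕ, 1 ≤ N → (t N) ^ 2 = (σ : ℝ) * y ^ 2 / N := by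
        intro N hN
        have hNpos : (0 : ℝ) < N := by exact_mod_cast hN
        rw [ht]
        simp only
        rw [mul_pow, Real.sq_sqrt (by positivity)]
        ring
      -- little-o expansion of exp at 0
      have hlo : (fun z : ℂ => Complex.exp z - 1 - z - z ^ 2 / 2) =o[𝓝 (0 : ℂ)]
          (fun z => z ^ 2) := by
        have h := Complex.exp_sub_sum_range_succ_isLittleO_pow 2
        refine h.congr' (Filter.Eventually.of_forall fun z => ?_) Filter.EventuallyEq.rfl
        simp only [Finset.sum_range_succ, Finset.sum_range_one]
        norm_num [Nat.factorial]
        ring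
      -- pointwise convergence
      have hpt : ∀ x : ℝ, Tendsto
          (fun N : ℕ => ((((t N) ^ 2 : ℝ)) : ℂ)⁻¹ * (rem (t N) x * ((ρ x : ℝ) : ℂ)))
          atTop (𝓝 0) := by
        intro x
        have hzc : Tendsto (fun N : ℕ => ((t N : ℝ) : ℂ)) atTop (𝓝 0) := by
          have := (Complex.continuous_ofReal.tendsto 0).comp ht0
          exact this
        have hz : Tendsto (fun N : ℕ => -Complex.I * ((t N : ℝ) : ℂ) * (x : ℂ)) atTop
            (𝓝 0) := by
          simpa using (hzc.const_mul (-Complex.I)).mul_const (x : ℂ)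
        have hcomp := hlo.comp_tendsto hz
        rw [NormedAddCommGroup.tendsto_nhds_zero]
        intro ε hε
        have hc : (0 : ℝ) < ε / (x ^ 2 * |ρ x| + 1) := by positivity
        filter_upwards [hcomp.def hc] with N hN
        simp only [Function.comp_apply] at hN
        have hrn : ‖rem (t N) x‖ ≤ ε / (x ^ 2 * |ρ x| + 1) * ((t N) ^ 2 * x ^ 2) := by
          have hzn : ‖(-Complex.I * ((t N : ℝ) : ℂ) * (x : ℂ)) ^ 2‖ = (t N) ^ 2 * x ^ 2 := by
            rw [norm_pow]
            have : ‖-Complex.I * ((t N : ℝ) : ℂ) * (x : ℂ)‖ = |t N| * |x| := by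
              simp [norm_mul]
            rw [this, mul_pow, sq_abs, sq_abs]
          rw [rem_eq]
          calc ‖Complex.exp (-Complex.I * (t N) * x) - 1 - (-Complex.I * (t N) * x)
                - (-Complex.I * (t N) * x) ^ 2 / 2‖
              ≤ ε / (x ^ 2 * |ρ x| + 1) * ‖(-Complex.I * ((t N : ℝ) : ℂ) * (x : ℂ)) ^ 2‖ := hN
            _ = ε / (x ^ 2 * |ρ x| + 1) * ((t N) ^ 2 * x ^ 2) := by rw [hzn]
        have hq : (((t N) ^ 2)⁻¹ : ℝ) * (t N) ^ 2 ≤ 1 := by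
          rcases eq_or_ne (t N) 0 with h | h
          · simp [h]
          · rw [inv_mul_cancel₀ (pow_ne_zero 2 h)]
        calc ‖((((t N) ^ 2 : ℝ)) : ℂ)⁻¹ * (rem (t N) x * ((ρ x : ℝ) : ℂ))‖
            = (((t N) ^ 2)⁻¹ : ℝ) * (‖rem (t N) x‖ * |ρ x|) := by
              rw [norm_mul, norm_mul, norm_inv, Complex.norm_real, Complex.norm_real,
                Real.norm_eq_abs, Real.norm_eq_abs, abs_of_nonneg (sq_nonneg _)]
          _ ≤ (((t N) ^ 2)⁻¹ : ℝ) *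
                ((ε / (x ^ 2 * |ρ x| + 1) * ((t N) ^ 2 * x ^ 2)) * |ρ x|) := by
              apply mul_le_mul_of_nonneg_left
                (mul_le_mul_of_nonneg_right hrn (abs_nonneg _)) (by positivity)
          _ = (ε / (x ^ 2 * |ρ x| + 1) * (x ^ 2 * |ρ x|)) *
                ((((t N) ^ 2)⁻¹ : ℝ) * (t N) ^ 2) := by ring
          _ ≤ ε / (x ^ 2 * |ρ x| + 1) * (x ^ 2 * |ρ x|) := by
              apply mul_le_of_le_one_right (by positivity) hq
          _ < ε := by
              rw [div_mul_eq_mul_div, div_lt_iff₀ (by positivity)]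
              nlinarith [abs_nonneg (ρ x), sq_nonneg x, mul_nonneg (sq_nonneg x) (abs_nonneg (ρ x))]
      -- dominated convergence
      have hDCT0 : Tendsto (fun N : ℕ =>
          ∫ x : ℝ, ((((t N) ^ 2 : ℝ)) : ℂ)⁻¹ * (rem (t N) x * ((ρ x : ℝ) : ℂ)))
          atTop (𝓝 (∫ _ : ℝ, (0 : ℂ))) := by
        apply tendsto_integral_filter_of_dominated_convergence
          (bound := fun x : ℝ => 4 * (x ^ 2 * |ρ x|))
        · apply Filter.Eventually.of_forall
          intro N
          apply AEStronglyMeasurable.const_mul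
          apply AEStronglyMeasurable.mul ?_
            (Complex.continuous_ofReal.comp_aestronglyMeasurable hInt.1)
          apply Continuous.aestronglyMeasurable
          unfold rem
          fun_prop
        · apply Filter.Eventually.of_forall
          intro N
          apply Filter.Eventually.of_forall
          intro x
          have hq : (((t N) ^ 2)⁻¹ : ℝ) * (t N) ^ 2 ≤ 1 := by
            rcases eq_or_ne (t N) 0 with h | h
            · simp [h]
            · rw [inv_mul_cancel₀ (pow_ne_zero 2 h)]
          calc ‖((((t N) ^ 2 : ℝ)) : ℂ)⁻¹ * (rem (t N) x * ((ρ x : ℝ) : ℂ))‖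
              = (((t N) ^ 2)⁻¹ : ℝ) * (‖rem (t N) x‖ * |ρ x|) := by
                rw [norm_mul, norm_mul, norm_inv, Complex.norm_real, Complex.norm_real,
                  Real.norm_eq_abs, Real.norm_eq_abs, abs_of_nonneg (sq_nonneg _)]
            _ ≤ (((t N) ^ 2)⁻¹ : ℝ) * ((4 * ((t N) ^ 2 * x ^ 2)) * |ρ x|) := by
                apply mul_le_mul_of_nonneg_left
                  (mul_le_mul_of_nonneg_right (rem_bound (t N) x) (abs_nonneg _))
                  (by positivity)
            _ = (4 * (x ^ 2 * |ρ x|)) * ((((t N) ^ 2)⁻¹ : ℝ) * (t N) ^ 2) := by ring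
            _ ≤ 4 * (x ^ 2 * |ρ x|) := by
                apply mul_le_of_le_one_right (by positivity) hq
        · have habs : Integrable (fun x : ℝ => |x ^ 2 * ρ x|) := hm2.abs
          have : Integrable (fun x : ℝ => 4 * |x ^ 2 * ρ x|) := habs.const_mul 4
          apply this.congr
          filter_upwards with x
          rw [abs_mul, abs_pow, sq_abs]
        · exact Filter.Eventually.of_forall hpt
      have hDCT : Tendsto (fun N : ℕ =>
          ((((t N) ^ 2 : ℝ)) : ℂ)⁻¹ * ∫ x : ℝ, rem (t N) x * ((ρ x : ℝ) : ℂ))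
          atTop (𝓝 0) := by
        have h' := hDCT0
        rw [integral_zero] at h'
        apply h'.congr
        intro N
        exact integral_const_mul _ _
      -- assemble
      have key : ∀ᶠ N : ℕ in atTop, (N : ℂ) * (FT ρ (t N) - 1) =
          -((((σ : ℝ) * γ * y ^ 2 / 2 : ℝ)) : ℂ) + (((σ : ℝ) * y ^ 2 : ℝ) : ℂ) *
            (((((t N) ^ 2 : ℝ)) : ℂ)⁻¹ * ∫ x : ℝ, rem (t N) x * ((ρ x : ℝ) : ℂ)) := by
        filter_upwards [eventually_ge_atTop 1] with N hN
        rw [FT_expand ρ γ hInt hmass hm1 hmean hm2 hγ (t N)]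
        have hNne : (N : ℂ) ≠ 0 := Nat.cast_ne_zero.mpr (by omega)
        have hσne : ((σ : ℝ) : ℂ) ≠ 0 := by
          simp only [ne_eq, Complex.ofReal_natCast, Nat.cast_eq_zero]
          omega
        have hyne : ((y : ℝ) : ℂ) ≠ 0 := Complex.ofReal_ne_zero.mpr hy
        have h2c : (((t N) ^ 2 : ℝ) : ℂ) = ((σ : ℝ) : ℂ) * ((y : ℝ) : ℂ) ^ 2 / (N : ℂ) := by
          rw [ht2 N hN]
          push_cast
          ring
        rw [mul_add]
        congr 1
        · push_cast [h2c]
          field_simp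
        · rw [h2c, inv_div]
          have hσy : ((σ : ℝ) : ℂ) * ((y : ℝ) : ℂ) ^ 2 ≠ 0 :=
            mul_ne_zero hσne (pow_ne_zero _ hyne)
          push_cast at hσy ⊢
          field_simp
          have hσ0 : (σ : ℂ) ≠ 0 := by exact_mod_cast (show σ ≠ 0 by omega)
          rw [mul_div_assoc, div_self hσ0, mul_one]
      have hlim : Tendsto (fun N : ℕ =>
          -((((σ : ℝ) * γ * y ^ 2 / 2 : ℝ)) : ℂ) + (((σ : ℝ) * y ^ 2 : ℝ) : ℂ) *
            (((((t N) ^ 2 : ℝ)) : ℂ)⁻¹ * ∫ x : ℝ, rem (t N) x * ((ρ x : ℝ) : ℂ)))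
          atTop (𝓝 (-((((σ : ℝ) * γ * y ^ 2 / 2 : ℝ)) : ℂ))) := by
        have := (hDCT.const_mul ((((σ : ℝ) * y ^ 2 : ℝ)) : ℂ)).const_add
          (-((((σ : ℝ) * γ * y ^ 2 / 2 : ℝ)) : ℂ))
        simpa using this
      exact hlim.congr' (by filter_upwards [key] with N hN using hN.symm)
  have hpow := pow_tendsto_cexp hmain
  convert hpow using 2
  push_cast
  ring
end

section
/- Let ρ satisfy the moment hypotheses. Then lim_{t→0, t≠0} |ρ̂(t)|^{1/t²} = e^{−γ/2}. -/
open MeasureTheory Filter Real Topology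

noncomputable def Eu (u : ℝ) : ℂ :=
  Complex.exp (u * Complex.I) - 1 - u * Complex.I + (u : ℂ) ^ 2 / 2

lemma hasDerivAt_expI (s : ℝ) :
    HasDerivAt (fun s : ℝ => Complex.exp (s * Complex.I)) (Complex.exp (s * Complex.I) * Complex.I) s := by
  have h : HasDerivAt (fun z : ℂ => Complex.exp (z * Complex.I)) (Complex.exp ((s:ℂ) * Complex.I) * Complex.I) (s : ℂ) := by
    have h' := (Complex.hasDerivAt_exp ((s:ℂ) * Complex.I)).comp (s:ℂ)
      ((hasDerivAt_id (s:ℂ)).mul_const Complex.I)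
    simp only [id, one_mul] at h'
    exact h'
  exact h.comp_ofReal

lemma norm_expI_sub_one_le (u : ℝ) : ‖Complex.exp (u * Complex.I) - 1‖ ≤ |u| := by
  have key : Complex.exp (u * Complex.I) - 1
      = ∫ s in (0:ℝ)..u, Complex.exp (s * Complex.I) * Complex.I := by
    have := intervalIntegral.integral_eq_sub_of_hasDerivAt
      (f := fun s : ℝ => Complex.exp (s * Complex.I))
      (f' := fun s : ℝ => Complex.exp (s * Complex.I) * Complex.I)
      (a := 0) (b := u) (fun x _ => hasDerivAt_expI x)
      (((Complex.continuous_exp.comp (by continuity)).mul continuous_const).intervalIntegrable 0 u)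
    simpa using this.symm
  rw [key]
  have := intervalIntegral.norm_integral_le_of_norm_le_const
    (a := 0) (b := u) (C := 1)
    (f := fun s : ℝ => Complex.exp (s * Complex.I) * Complex.I) ?_
  · simpa using this
  · intro x _
    simp [Complex.norm_exp_ofReal_mul_I]

lemma hasDerivAt_f2 (s : ℝ) :
    HasDerivAt (fun s : ℝ => Complex.exp (s * Complex.I) - 1 - s * Complex.I)
      ((Complex.exp (s * Complex.I) - 1) * Complex.I) s := by
  have h1 : HasDerivAt (fun s : ℝ => (s : ℂ) * Complex.I) Complex.I s := by
    simpa using ((hasDerivAt_id (s:ℂ)).mul_const Complex.I).comp_ofReal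
  have := ((hasDerivAt_expI s).sub_const 1).sub h1
  rw [show (Complex.exp (s * Complex.I) - 1) * Complex.I = Complex.exp (s * Complex.I) * Complex.I - Complex.I by ring]
  exact this

lemma norm_f2_le (u : ℝ) (hu : 0 ≤ u) :
    ‖Complex.exp (u * Complex.I) - 1 - u * Complex.I‖ ≤ u ^ 2 / 2 := by
  have key : Complex.exp (u * Complex.I) - 1 - u * Complex.I
      = ∫ s in (0:ℝ)..u, (Complex.exp (s * Complex.I) - 1) * Complex.I := by
    have := intervalIntegral.integral_eq_sub_of_hasDerivAt
      (f := fun s : ℝ => Complex.exp (s * Complex.I) - 1 - s * Complex.I)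
      (f' := fun s : ℝ => (Complex.exp (s * Complex.I) - 1) * Complex.I)
      (a := 0) (b := u) (fun x _ => hasDerivAt_f2 x)
      ((((Complex.continuous_exp.comp (by continuity)).sub continuous_const).mul
        continuous_const).intervalIntegrable 0 u)
    simpa using this.symm
  rw [key]
  have hb : ∀ᵐ s : ℝ ∂(volume.restrict <| Set.uIoc (0:ℝ) u),
      ‖(Complex.exp (s * Complex.I) - 1) * Complex.I‖ ≤ s := by
    refine (ae_restrict_iff' measurableSet_uIoc).2 (.of_forall fun s hs => ?_)
    rw [Set.uIoc_of_le hu] at hs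
    calc ‖(Complex.exp (s * Complex.I) - 1) * Complex.I‖
        = ‖Complex.exp (s * Complex.I) - 1‖ := by simp
      _ ≤ |s| := norm_expI_sub_one_le s
      _ = s := abs_of_pos hs.1
  have := intervalIntegral.norm_integral_le_abs_of_norm_le hb
    (continuous_id.intervalIntegrable 0 u)
  calc ‖∫ s in (0:ℝ)..u, (Complex.exp (s * Complex.I) - 1) * Complex.I‖
      ≤ |∫ s in (0:ℝ)..u, s| := this
    _ = u ^ 2 / 2 := by
        rw [integral_id]
        rw [_root_.abs_of_nonneg (by nlinarith [sq_nonneg u] : (0:ℝ) ≤ (u^2 - 0^2)/2)]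
        ring

lemma hasDerivAt_Eu (s : ℝ) :
    HasDerivAt Eu ((Complex.exp (s * Complex.I) - 1 - s * Complex.I) * Complex.I) s := by
  have h1 : HasDerivAt (fun s : ℝ => ((s:ℂ)) ^ 2 / 2) ((s:ℂ)) s := by
    have : HasDerivAt (fun z : ℂ => z ^ 2 / 2) ((s:ℂ)) (s:ℂ) := by
      simpa using ((hasDerivAt_pow 2 ((s:ℂ))).div_const 2)
    exact this.comp_ofReal
  have h2 := (hasDerivAt_f2 s).add h1
  have heq : ((fun s : ℝ => Complex.exp (s * Complex.I) - 1 - s * Complex.I) + fun s : ℝ => (s:ℂ)^2/2) = Eu := by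
    funext v; simp only [Eu, Pi.add_apply]
  rw [heq] at h2
  rw [show (Complex.exp (s * Complex.I) - 1 - s * Complex.I) * Complex.I = (Complex.exp (s * Complex.I) - 1) * Complex.I + s by
    linear_combination (-(s:ℂ)) * Complex.I_sq]
  exact h2

lemma norm_Eu_le_cube_of_nonneg (u : ℝ) (hu : 0 ≤ u) : ‖Eu u‖ ≤ u ^ 3 / 6 := by
  have key : Eu u = ∫ s in (0:ℝ)..u,
      (Complex.exp (s * Complex.I) - 1 - s * Complex.I) * Complex.I := by
    have := intervalIntegral.integral_eq_sub_of_hasDerivAt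
      (f := Eu)
      (f' := fun s : ℝ => (Complex.exp (s * Complex.I) - 1 - s * Complex.I) * Complex.I)
      (a := 0) (b := u) (fun x _ => hasDerivAt_Eu x)
      (((((Complex.continuous_exp.comp (by continuity)).sub continuous_const).sub
        (by continuity)).mul continuous_const).intervalIntegrable 0 u)
    rw [this]
    simp [Eu]
  rw [key]
  have hb : ∀ᵐ s : ℝ ∂(volume.restrict <| Set.uIoc (0:ℝ) u),
      ‖(Complex.exp (s * Complex.I) - 1 - s * Complex.I) * Complex.I‖ ≤ s ^ 2 / 2 := by
    refine (ae_restrict_iff' measurableSet_uIoc).2 (.of_forall fun s hs => ?_)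
    rw [Set.uIoc_of_le hu] at hs
    calc ‖(Complex.exp (s * Complex.I) - 1 - s * Complex.I) * Complex.I‖
        = ‖Complex.exp (s * Complex.I) - 1 - s * Complex.I‖ := by simp
      _ ≤ s ^ 2 / 2 := norm_f2_le s hs.1.le
  have hint : IntervalIntegrable (fun s : ℝ => s ^ 2 / 2) volume 0 u :=
    ((continuous_pow 2).div_const 2).intervalIntegrable 0 u
  have hval : (∫ s in (0:ℝ)..u, s ^ 2 / 2) = u ^ 3 / 6 := by
    rw [intervalIntegral.integral_div, integral_pow]
    norm_num
    ring
  calc ‖∫ s in (0:ℝ)..u, (Complex.exp (s * Complex.I) - 1 - s * Complex.I) * Complex.I‖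
      ≤ |∫ s in (0:ℝ)..u, s ^ 2 / 2| := intervalIntegral.norm_integral_le_abs_of_norm_le hb hint
    _ = u ^ 3 / 6 := by
        rw [hval, _root_.abs_of_nonneg (by positivity : (0:ℝ) ≤ u^3/6)]

lemma norm_Eu_le_sq_of_nonneg (u : ℝ) (hu : 0 ≤ u) : ‖Eu u‖ ≤ u ^ 2 := by
  have h0 : Eu u = (Complex.exp (u * Complex.I) - 1 - u * Complex.I) + (u:ℂ)^2/2 := rfl
  rw [h0]
  refine (norm_add_le _ _).trans ?_
  have h2 : ‖((u:ℂ)^2/2 : ℂ)‖ = u^2/2 := by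
    rw [norm_div, norm_pow]
    simp [Complex.norm_real, _root_.sq_abs, _root_.abs_of_nonneg hu]
  rw [h2]
  have := norm_f2_le u hu
  linarith

lemma conj_Eu (u : ℝ) : (starRingEnd ℂ) (Eu u) = Eu (-u) := by
  simp only [Eu, map_add, map_sub, map_mul, map_one, map_div₀, map_pow, map_ofNat,
    Complex.conj_ofReal, Complex.conj_I, ← Complex.exp_conj]
  push_cast
  ring_nf

lemma norm_Eu_le_cube (u : ℝ) : ‖Eu u‖ ≤ |u| ^ 3 / 6 := by
  rcases le_or_gt 0 u with h | h
  · rw [_root_.abs_of_nonneg h]; exact norm_Eu_le_cube_of_nonneg u h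
  · rw [_root_.abs_of_neg h]
    calc ‖Eu u‖ = ‖(starRingEnd ℂ) (Eu u)‖ := (RCLike.norm_conj _).symm
      _ = ‖Eu (-u)‖ := by rw [conj_Eu]
      _ ≤ (-u)^3/6 := norm_Eu_le_cube_of_nonneg (-u) (by linarith)

lemma norm_Eu_le_sq (u : ℝ) : ‖Eu u‖ ≤ u ^ 2 := by
  rcases le_or_gt 0 u with h | h
  · exact norm_Eu_le_sq_of_nonneg u h
  · calc ‖Eu u‖ = ‖(starRingEnd ℂ) (Eu u)‖ := (RCLike.norm_conj _).symm
      _ = ‖Eu (-u)‖ := by rw [conj_Eu]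
      _ ≤ (-u)^2 := norm_Eu_le_sq_of_nonneg (-u) (by linarith)
      _ = u^2 := by ring

lemma continuous_Eu : Continuous Eu := by
  unfold Eu
  continuity

lemma split_Eu (ρ : ℝ → ℝ) (t x : ℝ) :
    (ρ x : ℂ) * Eu (-(t*x))
      = Complex.exp (-Complex.I * t * x) * (ρ x : ℂ) - (ρ x : ℂ)
        + (Complex.I * t) * ((x * ρ x : ℝ) : ℂ)
        + ((t:ℂ)^2/2) * ((x^2 * ρ x : ℝ) : ℂ) := by
  simp only [Eu]
  push_cast
  ring_nf

section Key

variable (ρ : ℝ → ℝ) (γ : ℝ)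
    (hInt : Integrable ρ)
    (hmass : ∫ x : ℝ, ρ x = 1)
    (hm1 : Integrable (fun x : ℝ => x * ρ x))
    (hmean : ∫ x : ℝ, x * ρ x = 0)
    (hm2 : Integrable (fun x : ℝ => x ^ 2 * ρ x))
    (hγ : γ = ∫ x : ℝ, x ^ 2 * ρ x)

include hInt in
lemma int_exp_mul (t : ℝ) :
    Integrable (fun x : ℝ => Complex.exp (-Complex.I * t * x) * (ρ x : ℂ)) := by
  refine Integrable.bdd_mul (c := 1) hInt.ofReal ?_ (.of_forall fun x => ?_)
  · exact (Complex.continuous_exp.comp (by continuity)).aestronglyMeasurable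
  · rw [Complex.norm_exp]
    simp

include hInt hm1 hm2 in
lemma int_rho_Eu (t : ℝ) : Integrable (fun x : ℝ => (ρ x : ℂ) * Eu (-(t*x))) := by
  have := ((((int_exp_mul ρ hInt t).sub hInt.ofReal).add
    ((hm1.ofReal).const_mul (Complex.I * t))).add
    ((hm2.ofReal).const_mul ((t:ℂ)^2/2)))
  exact this.congr (Filter.EventuallyEq.of_eq (funext fun x => (split_Eu ρ t x).symm))

include hInt hmass hm1 hmean hm2 hγ in
lemma integral_rho_Eu (t : ℝ) :
    (∫ x : ℝ, (ρ x : ℂ) * Eu (-(t*x))) = FT ρ t - 1 + (t:ℂ)^2/2 * γ := by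
  have e1 := int_exp_mul ρ hInt t
  have e2 : Integrable (fun x : ℝ => ((ρ x : ℝ) : ℂ)) volume := hInt.ofReal
  have e3 : Integrable (fun x : ℝ => (Complex.I * t) * ((x * ρ x : ℝ) : ℂ)) volume :=
    (hm1.ofReal (𝕜 := ℂ)).const_mul (Complex.I * t)
  have e4 : Integrable (fun x : ℝ => ((t:ℂ)^2/2) * ((x^2 * ρ x : ℝ) : ℂ)) volume :=
    (hm2.ofReal (𝕜 := ℂ)).const_mul ((t:ℂ)^2/2)
  calc (∫ x : ℝ, (ρ x : ℂ) * Eu (-(t*x)))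
      = ∫ x : ℝ, (Complex.exp (-Complex.I * t * x) * (ρ x : ℂ) - (ρ x : ℂ)
        + (Complex.I * t) * ((x * ρ x : ℝ) : ℂ)
        + ((t:ℂ)^2/2) * ((x^2 * ρ x : ℝ) : ℂ)) := by
          congr 1; funext x; exact split_Eu ρ t x
    _ = ((∫ x : ℝ, Complex.exp (-Complex.I * t * x) * (ρ x : ℂ)) - ∫ x : ℝ, (ρ x : ℂ))
        + (Complex.I * t) * (∫ x : ℝ, ((x * ρ x : ℝ) : ℂ))
        + ((t:ℂ)^2/2) * (∫ x : ℝ, ((x^2 * ρ x : ℝ) : ℂ)) := by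
          have E12 : Integrable (fun x : ℝ => Complex.exp (-Complex.I * t * x) * (ρ x : ℂ)
              - (ρ x : ℂ)) volume := e1.sub e2
          have E123 : Integrable (fun x : ℝ => Complex.exp (-Complex.I * t * x) * (ρ x : ℂ)
              - (ρ x : ℂ) + (Complex.I * t) * ((x * ρ x : ℝ) : ℂ)) volume := E12.add e3
          rw [integral_add E123 e4, integral_add E12 e3, integral_sub e1 e2,
            integral_const_mul, integral_const_mul]
    _ = FT ρ t - 1 + (t:ℂ)^2/2 * γ := by
          have c1 : (∫ x : ℝ, ((ρ x : ℝ) : ℂ)) = ((∫ x : ℝ, ρ x : ℝ) : ℂ) := integral_ofReal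
          have c2 : (∫ x : ℝ, ((x * ρ x : ℝ) : ℂ)) = ((∫ x : ℝ, x * ρ x : ℝ) : ℂ) := integral_ofReal
          have c3 : (∫ x : ℝ, ((x^2 * ρ x : ℝ) : ℂ)) = ((∫ x : ℝ, x^2 * ρ x : ℝ) : ℂ) := integral_ofReal
          rw [c1, c2, c3, hmass, hmean, ← hγ]
          simp [FT]

end Key

lemma norm_coe_mul_Eu (ρ : ℝ → ℝ) (t x : ℝ) :
    ‖(ρ x : ℂ) * Eu (-(t*x)) / (t:ℂ)^2‖ = |ρ x| * ‖Eu (-(t*x))‖ / t^2 := by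
  rw [norm_div, norm_mul, Complex.norm_real, Real.norm_eq_abs, norm_pow, Complex.norm_real,
    Real.norm_eq_abs, _root_.sq_abs]

lemma tendsto_rhoEu_div (ρ : ℝ → ℝ)
    (hInt : Integrable ρ) (hm2 : Integrable (fun x : ℝ => x ^ 2 * ρ x)) :
    Tendsto (fun t : ℝ => ∫ x : ℝ, (ρ x : ℂ) * Eu (-(t*x)) / (t:ℂ)^2)
      (𝓝[≠] (0:ℝ)) (𝓝 (0:ℂ)) := by
  have h0 : (0:ℂ) = ∫ x : ℝ, (0:ℂ) := by simp
  rw [h0]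
  refine tendsto_integral_filter_of_dominated_convergence
    (bound := fun x : ℝ => x^2 * |ρ x|) ?_ ?_ ?_ ?_
  · refine Filter.Eventually.of_forall fun t => ?_
    have hc : Continuous fun x : ℝ => Eu (-(t*x)) := by
      exact continuous_Eu.comp ((continuous_const.mul continuous_id).neg)
    have := ((Complex.continuous_ofReal.comp_aestronglyMeasurable hInt.1).mul
      hc.aestronglyMeasurable).mul (aestronglyMeasurable_const (b := ((t:ℂ)^2)⁻¹))
    simp only [div_eq_mul_inv]; exact this
  · filter_upwards [self_mem_nhdsWithin] with t ht
    refine Filter.Eventually.of_forall fun x => ?_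
    have ht' : (t:ℝ) ≠ 0 := ht
    rw [norm_coe_mul_Eu]
    have hE : ‖Eu (-(t*x))‖ ≤ (t*x)^2 := by
      simpa using norm_Eu_le_sq (-(t*x))
    have ht2 : (0:ℝ) < t^2 := by positivity
    calc |ρ x| * ‖Eu (-(t*x))‖ / t^2 ≤ |ρ x| * (t*x)^2 / t^2 := by gcongr
      _ = x^2 * |ρ x| := by field_simp
  · refine ((hm2.abs).congr (Filter.Eventually.of_forall fun x => ?_))
    simp [abs_mul, _root_.abs_of_nonneg (sq_nonneg x)]
  · refine Filter.Eventually.of_forall fun x => ?_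
    refine squeeze_zero_norm' (a := fun t : ℝ => |ρ x| * |x|^3 / 6 * |t|) ?_ ?_
    · filter_upwards [self_mem_nhdsWithin] with t ht
      have ht' : (t:ℝ) ≠ 0 := ht
      rw [norm_coe_mul_Eu]
      have hE : ‖Eu (-(t*x))‖ ≤ |t*x|^3/6 := by
        simpa [abs_neg] using norm_Eu_le_cube (-(t*x))
      have ht2 : (0:ℝ) < t^2 := by positivity
      calc |ρ x| * ‖Eu (-(t*x))‖ / t^2 ≤ |ρ x| * (|t*x|^3/6) / t^2 := by gcongr
        _ = |ρ x| * |x|^3 / 6 * |t| := by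
            rw [abs_mul]
            rw [show ( |t| * |x| )^3 = (|t|^2 * |t|) * |x|^3 by ring, _root_.sq_abs]
            field_simp
    · have : Tendsto (fun t : ℝ => |ρ x| * |x|^3 / 6 * |t|) (𝓝[≠] (0:ℝ))
          (𝓝 (|ρ x| * |x|^3 / 6 * |0|)) := by
        refine Tendsto.const_mul _ ?_
        exact (_root_.continuous_abs.tendsto 0).mono_left nhdsWithin_le_nhds
      simpa using this

section Main

variable {ρ : ℝ → ℝ} {γ : ℝ}

lemma key_complex
    (hInt : Integrable ρ)
    (hmass : ∫ x : ℝ, ρ x = 1)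
    (hm1 : Integrable (fun x : ℝ => x * ρ x))
    (hmean : ∫ x : ℝ, x * ρ x = 0)
    (hm2 : Integrable (fun x : ℝ => x ^ 2 * ρ x))
    (hγ : γ = ∫ x : ℝ, x ^ 2 * ρ x) :
    Tendsto (fun t : ℝ => (FT ρ t - 1) / (t:ℂ)^2) (𝓝[≠] (0:ℝ)) (𝓝 (-((γ:ℂ)/2))) := by
  have h := (tendsto_rhoEu_div ρ hInt hm2).sub_const ((γ:ℂ)/2)
  rw [zero_sub] at h
  refine Tendsto.congr' ?_ h
  filter_upwards [self_mem_nhdsWithin] with t ht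
  have ht' : (t:ℝ) ≠ 0 := ht
  have htc : ((t:ℂ))^2 ≠ 0 := by
    simpa using pow_ne_zero 2 (Complex.ofReal_ne_zero.2 ht')
  have htc0 : (t:ℂ) ≠ 0 := Complex.ofReal_ne_zero.2 ht'
  have hi := integral_rho_Eu ρ γ hInt hmass hm1 hmean hm2 hγ t
  rw [integral_div, hi]
  field_simp
  ring

lemma key_normsq
    (hInt : Integrable ρ)
    (hmass : ∫ x : ℝ, ρ x = 1)
    (hm1 : Integrable (fun x : ℝ => x * ρ x))
    (hmean : ∫ x : ℝ, x * ρ x = 0)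
    (hm2 : Integrable (fun x : ℝ => x ^ 2 * ρ x))
    (hγ : γ = ∫ x : ℝ, x ^ 2 * ρ x) :
    Tendsto (fun t : ℝ => (‖FT ρ t‖^2 - 1) / t^2) (𝓝[≠] (0:ℝ)) (𝓝 (-γ)) := by
  set z : ℝ → ℂ := fun t => (FT ρ t - 1) / (t:ℂ)^2 with hz
  have hzl := key_complex hInt hmass hm1 hmean hm2 hγ
  rw [← hz] at hzl
  have hre : Tendsto (fun t => (z t).re) (𝓝[≠] (0:ℝ)) (𝓝 (-(γ/2))) := by
    have := (Complex.continuous_re.tendsto _).comp hzl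
    simp at this; exact this
  have hns : Tendsto (fun t => Complex.normSq (z t)) (𝓝[≠] (0:ℝ))
      (𝓝 (Complex.normSq (-((γ:ℂ)/2)))) :=
    (Complex.continuous_normSq.tendsto _).comp hzl
  have hsq : Tendsto (fun t : ℝ => t^2) (𝓝[≠] (0:ℝ)) (𝓝 0) := by
    have := ((continuous_pow 2).tendsto (0:ℝ)).mono_left (nhdsWithin_le_nhds (s := {(0:ℝ)}ᶜ))
    simpa using this
  have hg : Tendsto (fun t : ℝ => 2 * (z t).re + t^2 * Complex.normSq (z t))
      (𝓝[≠] (0:ℝ)) (𝓝 (-γ)) := by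
    have := (hre.const_mul 2).add (hsq.mul hns)
    have h2 : (2 : ℝ) * -(γ/2) + 0 * Complex.normSq (-((γ:ℂ)/2)) = -γ := by ring
    rw [h2] at this
    exact this
  refine Tendsto.congr' ?_ hg
  filter_upwards [self_mem_nhdsWithin] with t ht
  have ht' : (t:ℝ) ≠ 0 := ht
  have htc : ((t:ℂ))^2 ≠ 0 := by
    simpa using pow_ne_zero 2 (Complex.ofReal_ne_zero.2 ht')
  have htc0 : (t:ℂ) ≠ 0 := Complex.ofReal_ne_zero.2 ht'
  have hFT : FT ρ t = 1 + ((t^2 : ℝ) : ℂ) * z t := by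
    rw [hz]
    push_cast
    field_simp
    ring
  have hnormsq : ‖FT ρ t‖^2 = (1 + t^2 * (z t).re)^2 + (t^2 * (z t).im)^2 := by
    rw [Complex.sq_norm, hFT, Complex.normSq_apply]
    simp only [Complex.add_re, Complex.add_im, Complex.mul_re, Complex.mul_im,
      Complex.ofReal_re, Complex.ofReal_im, Complex.one_re, Complex.one_im]
    ring
  rw [hnormsq, Complex.normSq_apply]
  field_simp
  ring

end Main

lemma log_one_add_div_tendsto :
    Tendsto (fun u : ℝ => Real.log (1+u) / u) (𝓝[≠] (0:ℝ)) (𝓝 1) := by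
  have hd : HasDerivAt Real.log 1 1 := by
    simpa using Real.hasDerivAt_log one_ne_zero
  rw [hasDerivAt_iff_tendsto_slope] at hd
  have hshift : Tendsto (fun u : ℝ => 1 + u) (𝓝[≠] (0:ℝ)) (𝓝[≠] (1:ℝ)) := by
    rw [tendsto_nhdsWithin_iff]
    constructor
    · have h1 : Tendsto (fun u : ℝ => 1 + u) (𝓝 (0:ℝ)) (𝓝 (1+0 : ℝ)) :=
        (continuous_const.add continuous_id).tendsto (0:ℝ)
      norm_num at h1
      exact h1.mono_left (nhdsWithin_le_nhds (s := {(0:ℝ)}ᶜ))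
    · filter_upwards [self_mem_nhdsWithin] with u hu
      have : (u:ℝ) ≠ 0 := hu
      simp only [Set.mem_compl_iff, Set.mem_singleton_iff]
      intro h
      exact this (by linarith)
  have := hd.comp hshift
  refine Tendsto.congr' ?_ this
  refine Filter.Eventually.of_forall fun u => ?_
  simp only [Function.comp_apply]
  rw [slope_def_field, Real.log_one, sub_zero, add_sub_cancel_left]

lemma key_log
    (hInt : Integrable ρ)
    (hmass : ∫ x : ℝ, ρ x = 1)
    (hm1 : Integrable (fun x : ℝ => x * ρ x))
    (hmean : ∫ x : ℝ, x * ρ x = 0)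
    (hm2 : Integrable (fun x : ℝ => x ^ 2 * ρ x))
    (hγ : γ = ∫ x : ℝ, x ^ 2 * ρ x) (hγpos : 0 < γ) :
    Tendsto (fun t : ℝ => Real.log ‖FT ρ t‖ / t^2) (𝓝[≠] (0:ℝ)) (𝓝 (-γ/2)) := by
  set s : ℝ → ℝ := fun t => ‖FT ρ t‖^2 - 1 with hsdef
  have hs : Tendsto (fun t => s t / t^2) (𝓝[≠] (0:ℝ)) (𝓝 (-γ)) :=
    key_normsq hInt hmass hm1 hmean hm2 hγ
  have hsq : Tendsto (fun t : ℝ => t^2) (𝓝[≠] (0:ℝ)) (𝓝 0) := by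
    have := ((continuous_pow 2).tendsto (0:ℝ)).mono_left (nhdsWithin_le_nhds (s := {(0:ℝ)}ᶜ))
    simpa using this
  have hs0 : Tendsto s (𝓝[≠] (0:ℝ)) (𝓝 0) := by
    have h := hs.mul hsq
    rw [mul_zero] at h
    refine Tendsto.congr' ?_ h
    filter_upwards [self_mem_nhdsWithin] with t ht
    have ht' : (t:ℝ) ≠ 0 := ht
    field_simp
  have hneg : ∀ᶠ t in 𝓝[≠] (0:ℝ), s t / t^2 < 0 :=
    hs.eventually (Iio_mem_nhds (by linarith))
  have hsmall : ∀ᶠ t in 𝓝[≠] (0:ℝ), |s t| < 1/2 := by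
    have : Set.Ioo (-(1/2) : ℝ) (1/2) ∈ 𝓝 (0:ℝ) := Ioo_mem_nhds (by norm_num) (by norm_num)
    filter_upwards [hs0.eventually this] with t ht
    rw [abs_lt]; exact ⟨ht.1, ht.2⟩
  have hsne : Tendsto s (𝓝[≠] (0:ℝ)) (𝓝[≠] (0:ℝ)) := by
    rw [tendsto_nhdsWithin_iff]
    refine ⟨hs0, ?_⟩
    filter_upwards [hneg, self_mem_nhdsWithin] with t htneg ht
    have ht' : (t:ℝ) ≠ 0 := ht
    have ht2 : (0:ℝ) < t^2 := by positivity
    have : s t < 0 := by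
      by_contra h
      push_neg at h
      exact absurd (div_nonneg h ht2.le) (not_le.2 htneg)
    simp only [Set.mem_compl_iff, Set.mem_singleton_iff]
    linarith
  have hlog := log_one_add_div_tendsto.comp hsne
  have hprod := ((hlog.const_mul (1/2 : ℝ)).mul hs)
  have hval : ((1/2 : ℝ) * 1) * (-γ) = -γ/2 := by ring
  rw [hval] at hprod
  refine Tendsto.congr' ?_ hprod
  filter_upwards [hneg, hsmall, self_mem_nhdsWithin] with t htneg htsmall ht
  have ht' : (t:ℝ) ≠ 0 := ht
  have ht2 : (0:ℝ) < t^2 := by positivity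
  have hslt : s t < 0 := by
    by_contra h
    push_neg at h
    exact absurd (div_nonneg h ht2.le) (not_le.2 htneg)
  have hsne' : s t ≠ 0 := ne_of_lt hslt
  have habs : -(1/2 : ℝ) < s t := by
    have := abs_lt.1 htsmall
    linarith [this.1]
  have hnormsq : ‖FT ρ t‖^2 = 1 + s t := by rw [hsdef]; ring
  have hnpos : (0:ℝ) < ‖FT ρ t‖ := by
    have h2 : (0:ℝ) < ‖FT ρ t‖^2 := by rw [hnormsq]; linarith
    have := norm_nonneg (FT ρ t)
    nlinarith
  have hlogeq : Real.log ‖FT ρ t‖ = (1/2) * Real.log (1 + s t) := by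
    rw [← hnormsq, Real.log_pow]
    push_cast
    ring
  simp only [Function.comp_apply]
  rw [hlogeq]
  field_simp

theorem modulus_power_limit_at_zero
    (ρ : ℝ → ℝ) (γ : ℝ)
    (hInt : Integrable ρ)
    (hpos : ∀ᵐ x : ℝ, 0 ≤ ρ x)
    (hmass : ∫ x : ℝ, ρ x = 1)
    (hm1 : Integrable (fun x : ℝ => x * ρ x))
    (hmean : ∫ x : ℝ, x * ρ x = 0)
    (hm2 : Integrable (fun x : ℝ => x ^ 2 * ρ x))
    (hγ : γ = ∫ x : ℝ, x ^ 2 * ρ x) (hγpos : 0 < γ) :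
    Tendsto (fun t : ℝ => ‖FT ρ t‖ ^ (1 / t ^ 2)) (𝓝[≠] 0)
      (𝓝 (Real.exp (-γ / 2))) := by
  have hL := key_log hInt hmass hm1 hmean hm2 hγ hγpos
  have hexp : Tendsto (fun t : ℝ => Real.exp (Real.log ‖FT ρ t‖ / t^2)) (𝓝[≠] (0:ℝ))
      (𝓝 (Real.exp (-γ/2))) := (Real.continuous_exp.tendsto _).comp hL
  -- eventual positivity of ‖FT ρ t‖
  have hz := key_complex hInt hmass hm1 hmean hm2 hγ
  have hsqC : Tendsto (fun t : ℝ => ((t:ℂ))^2) (𝓝[≠] (0:ℝ)) (𝓝 0) := by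
    have hc : Continuous fun t : ℝ => ((t:ℂ))^2 := by continuity
    have := (hc.tendsto (0:ℝ)).mono_left (nhdsWithin_le_nhds (s := {(0:ℝ)}ᶜ))
    simpa using this
  have hFT1 : Tendsto (fun t : ℝ => FT ρ t) (𝓝[≠] (0:ℝ)) (𝓝 1) := by
    have h := (hz.mul hsqC).const_add (1:ℂ)
    rw [mul_zero, add_zero] at h
    refine Tendsto.congr' ?_ h
    filter_upwards [self_mem_nhdsWithin] with t ht
    have ht' : (t:ℝ) ≠ 0 := ht
    have htc : ((t:ℂ))^2 ≠ 0 := by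
      simpa using pow_ne_zero 2 (Complex.ofReal_ne_zero.2 ht')
    have htc0 : (t:ℂ) ≠ 0 := Complex.ofReal_ne_zero.2 ht'
    field_simp
    ring
  have hnorm1 : Tendsto (fun t : ℝ => ‖FT ρ t‖) (𝓝[≠] (0:ℝ)) (𝓝 1) := by
    have := (continuous_norm.tendsto (1:ℂ)).comp hFT1
    simp at this; exact this
  have hposev : ∀ᶠ t in 𝓝[≠] (0:ℝ), 0 < ‖FT ρ t‖ :=
    hnorm1.eventually (Ioi_mem_nhds (by norm_num : (0:ℝ) < 1))
  refine Tendsto.congr' ?_ hexp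
  filter_upwards [hposev] with t htpos
  rw [Real.rpow_def_of_pos htpos, mul_one_div]
end
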